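/- Let $\Omega \subseteq \mathbb{R}^N$ be open, $v \in C^2(\Omega)$ with $v > 0$ and $-\Delta v > 0$ on $\Omega$, and $w \in C^2(\Omega)$. Then at every point of $\Omega$: $|\Delta w|^2 \ge \Delta v\,\Delta\!\left(\frac{w^2}{v}\right)$. -/

import Mathlib

open MeasureTheory

variable {E : Type*} [NormedAddCommGroup E] [NormedSpace ℝ E]

section helpers
variable {f g : E → ℝ} {x z : E}

private lemma fapp_mul (hf : DifferentiableAt ℝ f x) (hg : DifferentiableAt ℝ g x) :
    fderiv ℝ (fun y => f y * g y) x z = f x * fderiv ℝ g x z + g x * fderiv ℝ f x z := by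
  rw [fderiv_fun_mul hf hg]
  simp [smul_eq_mul]

private lemma diff_inv_comp (hg : DifferentiableAt ℝ g x) (hgx : g x ≠ 0) :
    DifferentiableAt ℝ (fun y => (g y)⁻¹) x :=
  ((hasDerivAt_inv hgx).comp_hasFDerivAt x hg.hasFDerivAt).differentiableAt

private lemma fapp_inv (hg : DifferentiableAt ℝ g x) (hgx : g x ≠ 0) :
    fderiv ℝ (fun y => (g y)⁻¹) x z = -(fderiv ℝ g x z) / g x ^ 2 := by
  have h := (hasDerivAt_inv hgx).comp_hasFDerivAt x hg.hasFDerivAt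
  have h2 : fderiv ℝ (fun y => (g y)⁻¹) x = (-(g x ^ 2)⁻¹) • fderiv ℝ g x := by
    simpa [Function.comp_def] using h.fderiv
  rw [h2]
  simp [smul_eq_mul]
  ring

private lemma fapp_div (hf : DifferentiableAt ℝ f x) (hg : DifferentiableAt ℝ g x)
    (hgx : g x ≠ 0) :
    fderiv ℝ (fun y => f y / g y) x z
      = (g x * fderiv ℝ f x z - f x * fderiv ℝ g x z) / g x ^ 2 := by
  have h1 : (fun y => f y / g y) = fun y => f y * (g y)⁻¹ := by
    funext y; rw [div_eq_mul_inv]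
  rw [h1, fapp_mul hf (diff_inv_comp hg hgx), fapp_inv hg hgx]
  field_simp
  ring

private lemma diff_div' (hf : DifferentiableAt ℝ f x) (hg : DifferentiableAt ℝ g x)
    (hgx : g x ≠ 0) :
    DifferentiableAt ℝ (fun y => f y / g y) x := by
  have h1 : (fun y => f y / g y) = fun y => f y * (g y)⁻¹ := by
    funext y; rw [div_eq_mul_inv]
  rw [h1]; exact hf.mul (diff_inv_comp hg hgx)

private lemma fapp_sub (hf : DifferentiableAt ℝ f x) (hg : DifferentiableAt ℝ g x) :
    fderiv ℝ (fun y => f y - g y) x z = fderiv ℝ f x z - fderiv ℝ g x z := by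
  rw [fderiv_fun_sub hf hg]; simp

end helpers

noncomputable def lap {N : ℕ} (u : EuclideanSpace ℝ (Fin N) → ℝ)
    (x : EuclideanSpace ℝ (Fin N)) : ℝ :=
  ∑ i : Fin N, fderiv ℝ (fun y => fderiv ℝ u y (EuclideanSpace.single i 1)) x
    (EuclideanSpace.single i 1)

theorem biharmonic_picone_inequality {N : ℕ} (Ω : Set (EuclideanSpace ℝ (Fin N)))
    (hΩ : IsOpen Ω) (v w : EuclideanSpace ℝ (Fin N) → ℝ)
    (hv : ContDiffOn ℝ 2 v Ω) (hw : ContDiffOn ℝ 2 w Ω)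
    (hvpos : ∀ x ∈ Ω, 0 < v x) (hlapv : ∀ x ∈ Ω, 0 < -lap v x) :
    ∀ x ∈ Ω, lap v x * lap (fun y => (w y) ^ 2 / v y) x ≤ (lap w x) ^ 2 := by
  intro x hx
  classical
  set e : Fin N → EuclideanSpace ℝ (Fin N) := fun i => EuclideanSpace.single i 1 with he
  have hvne : ∀ y ∈ Ω, v y ≠ 0 := fun y hy => (hvpos y hy).ne'
  have hwd : ∀ y ∈ Ω, DifferentiableAt ℝ w y := fun y hy =>
    (hw.differentiableOn two_ne_zero).differentiableAt (hΩ.mem_nhds hy)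
  have hvd : ∀ y ∈ Ω, DifferentiableAt ℝ v y := fun y hy =>
    (hv.differentiableOn two_ne_zero).differentiableAt (hΩ.mem_nhds hy)
  have hw2 : DifferentiableOn ℝ (fun y => fderiv ℝ w y) Ω :=
    (hw.fderiv_of_isOpen hΩ (by norm_num)).differentiableOn one_ne_zero
  have hv2 : DifferentiableOn ℝ (fun y => fderiv ℝ v y) Ω :=
    (hv.fderiv_of_isOpen hΩ (by norm_num)).differentiableOn one_ne_zero
  have hDw : ∀ (i : Fin N), ∀ y ∈ Ω, DifferentiableAt ℝ (fun z => fderiv ℝ w z (e i)) y :=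
    fun i y hy => (hw2.differentiableAt (hΩ.mem_nhds hy)).clm_apply (differentiableAt_const _)
  have hDv : ∀ (i : Fin N), ∀ y ∈ Ω, DifferentiableAt ℝ (fun z => fderiv ℝ v z (e i)) y :=
    fun i y hy => (hv2.differentiableAt (hΩ.mem_nhds hy)).clm_apply (differentiableAt_const _)
  -- notation
  set W := w x with hW
  set V := v x with hV
  have hVpos : 0 < V := hvpos x hx
  set wi : Fin N → ℝ := fun i => fderiv ℝ w x (e i) with hwi
  set vi : Fin N → ℝ := fun i => fderiv ℝ v x (e i) with hvi
  set wii : Fin N → ℝ := fun i => fderiv ℝ (fun z => fderiv ℝ w z (e i)) x (e i) with hwii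
  set vii : Fin N → ℝ := fun i => fderiv ℝ (fun z => fderiv ℝ v z (e i)) x (e i) with hvii
  -- Step 1: first derivative formula on Ω
  have hu1 : ∀ (i : Fin N), ∀ y ∈ Ω, fderiv ℝ (fun z => w z ^ 2 / v z) y (e i)
      = (2 * w y * fderiv ℝ w y (e i) * v y - w y * w y * fderiv ℝ v y (e i)) / (v y * v y) := by
    intro i y hy
    have hrw : (fun z => w z ^ 2 / v z) = fun z => (w z * w z) / v z := by
      funext z; rw [pow_two]
    rw [hrw, fapp_div ((hwd y hy).fun_mul (hwd y hy)) (hvd y hy) (hvne y hy),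
      fapp_mul (hwd y hy) (hwd y hy)]
    ring
  -- Step 2: on each coordinate, second derivative via the explicit formula
  have key : ∀ i : Fin N,
      fderiv ℝ (fun y => fderiv ℝ (fun z => w z ^ 2 / v z) y (e i)) x (e i)
        = 2 * W / V * wii i - W ^ 2 / V ^ 2 * vii i
          + 2 / V * (wi i) ^ 2 - 4 * W / V ^ 2 * (wi i * vi i)
          + 2 * W ^ 2 / V ^ 3 * (vi i) ^ 2 := by
    intro i
    have heq : (fun y => fderiv ℝ (fun z => w z ^ 2 / v z) y (e i))
        =ᶠ[nhds x] (fun y =>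
          (2 * w y * fderiv ℝ w y (e i) * v y - w y * w y * fderiv ℝ v y (e i))
            / (v y * v y)) :=
      Filter.eventuallyEq_of_mem (hΩ.mem_nhds hx) (fun y hy => hu1 i y hy)
    rw [heq.fderiv_eq]
    -- differentiability of pieces at x
    have d1 : DifferentiableAt ℝ (fun y => 2 * w y) x := (hwd x hx).const_mul 2
    have d2 : DifferentiableAt ℝ (fun y => 2 * w y * fderiv ℝ w y (e i)) x :=
      d1.mul (hDw i x hx)
    have d3 : DifferentiableAt ℝ (fun y => 2 * w y * fderiv ℝ w y (e i) * v y) x :=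
      d2.mul (hvd x hx)
    have d4 : DifferentiableAt ℝ (fun y => w y * w y) x := (hwd x hx).mul (hwd x hx)
    have d5 : DifferentiableAt ℝ (fun y => w y * w y * fderiv ℝ v y (e i)) x :=
      d4.mul (hDv i x hx)
    have d6 : DifferentiableAt ℝ (fun y => v y * v y) x := (hvd x hx).mul (hvd x hx)
    have hne : v x * v x ≠ 0 := mul_ne_zero (hvne x hx) (hvne x hx)
    rw [fapp_div (d3.fun_sub d5) d6 hne, fapp_sub d3 d5, fapp_mul d2 (hvd x hx),
      fapp_mul d1 (hDw i x hx), fapp_mul d4 (hDv i x hx), fapp_mul (hwd x hx) (hwd x hx),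
      fapp_mul (hvd x hx) (hvd x hx), fderiv_const_mul (hwd x hx) 2]
    simp only [ContinuousLinearMap.smul_apply, smul_eq_mul, ← hW, ← hV, ← hwi, ← hvi,
      ← hwii, ← hvii]
    field_simp
    ring
  -- Step 3: sum up
  set A := lap w x with hA
  set B := lap v x with hB
  set Sw := ∑ i : Fin N, (wi i) ^ 2 with hSw
  set Sv := ∑ i : Fin N, (vi i) ^ 2 with hSv
  set P := ∑ i : Fin N, wi i * vi i with hP
  have hBneg : B < 0 := by
    have := hlapv x hx; linarith
  have hsum : lap (fun y => w y ^ 2 / v y) x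
      = 2 * W / V * A - W ^ 2 / V ^ 2 * B + 2 / V * Sw - 4 * W / V ^ 2 * P
        + 2 * W ^ 2 / V ^ 3 * Sv := by
    have hA' : A = ∑ i : Fin N, wii i := rfl
    have hB' : B = ∑ i : Fin N, vii i := rfl
    calc lap (fun y => w y ^ 2 / v y) x
        = ∑ i : Fin N, (2 * W / V * wii i - W ^ 2 / V ^ 2 * vii i
          + 2 / V * (wi i) ^ 2 - 4 * W / V ^ 2 * (wi i * vi i)
          + 2 * W ^ 2 / V ^ 3 * (vi i) ^ 2) :=
          Finset.sum_congr rfl (fun i _ => key i)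
      _ = _ := by
          rw [hA', hB', hSw, hSv, hP]
          simp only [Finset.sum_add_distrib, Finset.sum_sub_distrib, ← Finset.mul_sum]
  -- Step 4: the algebraic inequality
  have hT : 0 ≤ V ^ 2 * Sw - 2 * V * W * P + W ^ 2 * Sv := by
    have h1 : ∑ i : Fin N, (V * wi i - W * vi i) ^ 2
        = V ^ 2 * Sw - 2 * V * W * P + W ^ 2 * Sv := by
      rw [hSw, hSv, hP, Finset.mul_sum, Finset.mul_sum, Finset.mul_sum,
        ← Finset.sum_sub_distrib, ← Finset.sum_add_distrib]
      exact Finset.sum_congr rfl (fun i _ => by ring)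
    rw [← h1]
    exact Finset.sum_nonneg (fun i _ => sq_nonneg _)
  set T := V ^ 2 * Sw - 2 * V * W * P + W ^ 2 * Sv with hTdef
  rw [hsum]
  have h4 : B * (2 * W / V * A - W ^ 2 / V ^ 2 * B + 2 / V * Sw - 4 * W / V ^ 2 * P
      + 2 * W ^ 2 / V ^ 3 * Sv)
      = (2 * W * A * B * V ^ 2 - W ^ 2 * B ^ 2 * V + 2 * B * T) / V ^ 3 := by
    rw [hTdef]
    field_simp
    ring
  rw [h4, div_le_iff₀ (by positivity : (0:ℝ) < V ^ 3)]
  nlinarith [mul_nonneg (sq_nonneg (V * A - W * B)) hVpos.le,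
    mul_nonpos_of_nonpos_of_nonneg hBneg.le hT, sq_nonneg (V * A - W * B)]
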